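/- Let C be a triangulated category equipped with a weight structure w, let m ≤ n be integers, and let X → O → Y → X[1] be a distinguished triangle with X ∈ C_{w≤m−1} and Y ∈ C_{w≥n+1} (a decomposition of O avoiding weights m,…,n). Then: (a) for every integer l with m−1 ≤ l ≤ n, this triangle is an l-weight decomposition of O; (b) O is without weights m,…,n; and (c) the triangle is unique up to isomorphism: if X' → O → Y' → X'[1] is another distinguished triangle with X' ∈ C_{w≤m−1} and Y' ∈ C_{w≥n+1}, then there exist isomorphisms a : X → X' and b : Y → Y' such that (a, id_O, b) is an isomorphism of distinguished triangles. -/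

import Mathlib

open CategoryTheory CategoryTheory.Limits CategoryTheory.Pretriangulated ZeroObject

universe v u

variable (C : Type u) [Category.{v} C] [HasZeroObject C] [Preadditive C] [HasShift C ℤ]
  [∀ n : ℤ, (shiftFunctor C n).Additive] [Pretriangulated C]

/-- A weight structure on a triangulated category `C`: a pair of retract-closed classes
`le = C_{w≤0}` and `ge = C_{w≥0}` satisfying semi-invariance with respect to translations,
orthogonality, and the existence of weight decompositions. -/
structure WeightStructure where
  /-- the class `C_{w≤0}` -/
  le : Set C
  /-- the class `C_{w≥0}` -/
  ge : Set C
  /-- `C_{w≤0}` is closed under retracts -/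
  le_retract : ∀ ⦃X Y : C⦄ (i : X ⟶ Y) (r : Y ⟶ X), i ≫ r = 𝟙 X → le Y → le X
  /-- `C_{w≥0}` is closed under retracts -/
  ge_retract : ∀ ⦃X Y : C⦄ (i : X ⟶ Y) (r : Y ⟶ X), i ≫ r = 𝟙 X → ge Y → ge X
  /-- `C_{w≤0} ⊆ C_{w≤0}[1]`, i.e. `X ∈ C_{w≤0} → X[-1] ∈ C_{w≤0}` -/
  le_shift : ∀ ⦃X : C⦄, le X → le ((shiftFunctor C (-1 : ℤ)).obj X)
  /-- `C_{w≥0}[1] ⊆ C_{w≥0}`, i.e. `X ∈ C_{w≥0} → X[1] ∈ C_{w≥0}` -/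
  ge_shift : ∀ ⦃X : C⦄, ge X → ge ((shiftFunctor C (1 : ℤ)).obj X)
  /-- orthogonality: `Hom(X, Y[1]) = 0` for `X ∈ C_{w≤0}`, `Y ∈ C_{w≥0}` -/
  orth : ∀ ⦃X Y : C⦄, le X → ge Y → ∀ f : X ⟶ (shiftFunctor C (1 : ℤ)).obj Y, f = 0
  /-- existence of weight decompositions -/
  decomp : ∀ M : C, ∃ (X Y : C) (f : X ⟶ M) (g : M ⟶ Y)
      (h : Y ⟶ (shiftFunctor C (1 : ℤ)).obj X),
      Triangle.mk f g h ∈ (distTriang C) ∧ le X ∧ ge ((shiftFunctor C (-1 : ℤ)).obj Y)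

variable {C}

namespace WeightStructure

/-- `X ∈ C_{w≤i} = C_{w≤0}[i]`, i.e. `X[-i] ∈ C_{w≤0}`. -/
def leDeg (w : WeightStructure C) (i : ℤ) (X : C) : Prop :=
  w.le ((shiftFunctor C (-i)).obj X)

/-- `X ∈ C_{w≥i} = C_{w≥0}[i]`, i.e. `X[-i] ∈ C_{w≥0}`. -/
def geDeg (w : WeightStructure C) (i : ℤ) (X : C) : Prop :=
  w.ge ((shiftFunctor C (-i)).obj X)

/-- The triangle `A → M → B → A[1]` is an `m`-weight decomposition of `M`:
it is distinguished, `A ∈ C_{w≤m}` and `B ∈ C_{w≥m+1}`. -/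
def IsWeightDecomp (w : WeightStructure C) (m : ℤ) {A M B : C}
    (f : A ⟶ M) (g : M ⟶ B) (h : B ⟶ (shiftFunctor C (1 : ℤ)).obj A) : Prop :=
  Triangle.mk f g h ∈ (distTriang C) ∧ w.leDeg m A ∧ w.geDeg (m + 1) B

/-- `g : M ⟶ N` kills weights `m,…,n`: there exist an `n`-weight decomposition of `M` and an
`(m-1)`-weight decomposition of `N` such that the composite `w_{≤n}M → M → N → w_{≥m}N` is `0`. -/
def KillsWeights (w : WeightStructure C) (m n : ℤ) {M N : C} (g : M ⟶ N) : Prop :=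
  ∃ (A B A' B' : C) (f : A ⟶ M) (p : M ⟶ B) (δ : B ⟶ (shiftFunctor C (1 : ℤ)).obj A)
    (f' : A' ⟶ N) (p' : N ⟶ B') (δ' : B' ⟶ (shiftFunctor C (1 : ℤ)).obj A'),
    w.IsWeightDecomp n f p δ ∧ w.IsWeightDecomp (m - 1) f' p' δ' ∧ f ≫ g ≫ p' = 0

/-- `M` is without weights `m,…,n` if `𝟙 M` kills weights `m,…,n`. -/
def WithoutWeights (w : WeightStructure C) (m n : ℤ) (M : C) : Prop :=
  w.KillsWeights m n (𝟙 M)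

end WeightStructure

namespace WeightStructure

lemma le_iso (w : WeightStructure C) {X Y : C} (e : X ≅ Y) (h : w.le Y) : w.le X :=
  w.le_retract e.hom e.inv e.hom_inv_id h

lemma ge_iso (w : WeightStructure C) {X Y : C} (e : X ≅ Y) (h : w.ge Y) : w.ge X :=
  w.ge_retract e.hom e.inv e.hom_inv_id h

lemma leDeg_mono (w : WeightStructure C) {a b : ℤ} (hab : a ≤ b) {X : C}
    (h : w.leDeg a X) : w.leDeg b X :=
  Int.le_induction h (fun b _ ih => w.le_iso
    ((shiftFunctorAdd' C (-b) (-1) (-(b + 1)) (by ring)).app X) (w.le_shift ih)) b hab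

lemma geDeg_anti (w : WeightStructure C) {a b : ℤ} (hab : a ≤ b) {Y : C}
    (h : w.geDeg b Y) : w.geDeg a Y :=
  Int.le_induction (motive := fun b _ => w.geDeg b Y → w.geDeg a Y) (fun h => h) (fun b _ ih h => ih (w.ge_iso
    ((shiftFunctorAdd' C (-(b + 1)) 1 (-b) (by ring)).app Y) (w.ge_shift h))) b hab h

lemma hom_zero (w : WeightStructure C) {a b : ℤ} (hab : a < b) {X Y : C}
    (hX : w.leDeg a X) (hY : w.geDeg b Y) (g : X ⟶ Y) : g = 0 := by
  have hY' : w.geDeg (a + 1) Y := w.geDeg_anti (by omega) hY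
  have e : (shiftFunctor C (-a)).obj Y ≅
      (shiftFunctor C (1 : ℤ)).obj ((shiftFunctor C (-(a + 1))).obj Y) :=
    (shiftFunctorAdd' C (-(a + 1)) 1 (-a) (by ring)).app Y
  have h0 := w.orth hX hY' ((shiftFunctor C (-a)).map g ≫ e.hom)
  have h1 : (shiftFunctor C (-a)).map g = 0 := by
    rw [← cancel_mono e.hom, zero_comp]; exact h0
  apply (shiftFunctor C (-a)).map_injective
  rw [h1, Functor.map_zero]

end WeightStructure

/-- Theorem 2.1.1(7): a distinguished triangle `X → O → Y → X[1]` with `X ∈ C_{w≤m-1}` and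
`Y ∈ C_{w≥n+1}` (a decomposition of `O` avoiding weights `m,…,n`) is an `l`-weight
decomposition of `O` for all `m-1 ≤ l ≤ n`; moreover `O` is without weights `m,…,n` and the
triangle is unique up to a (canonical) isomorphism. -/
theorem avoidingWeights_decomposition_properties (w : WeightStructure C) (m n : ℤ) (hmn : m ≤ n)
    {X O Y : C} (f : X ⟶ O) (p : O ⟶ Y) (δ : Y ⟶ (shiftFunctor C (1 : ℤ)).obj X)
    (hdist : Triangle.mk f p δ ∈ distTriang C)
    (hX : w.leDeg (m - 1) X) (hY : w.geDeg (n + 1) Y) :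
    (∀ l : ℤ, m - 1 ≤ l → l ≤ n → w.IsWeightDecomp l f p δ) ∧
    w.WithoutWeights m n O ∧
    (∀ ⦃X' Y' : C⦄ (f' : X' ⟶ O) (p' : O ⟶ Y') (δ' : Y' ⟶ (shiftFunctor C (1 : ℤ)).obj X'),
      Triangle.mk f' p' δ' ∈ (distTriang C) → w.leDeg (m - 1) X' → w.geDeg (n + 1) Y' →
      ∃ (a : X ≅ X') (b : Y ≅ Y'),
        f = a.hom ≫ f' ∧ p ≫ b.hom = p' ∧
        δ ≫ (shiftFunctor C (1 : ℤ)).map a.hom = b.hom ≫ δ') := by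
  have hdecomp : ∀ l : ℤ, m - 1 ≤ l → l ≤ n → w.IsWeightDecomp l f p δ := by
    intro l h1 h2
    exact ⟨hdist, w.leDeg_mono h1 hX, w.geDeg_anti (by omega) hY⟩
  refine ⟨hdecomp, ?_, ?_⟩
  · refine ⟨X, Y, X, Y, f, p, δ, f, p, δ, hdecomp n (by omega) le_rfl,
      hdecomp (m - 1) le_rfl (by omega), ?_⟩
    rw [Category.id_comp]
    exact comp_distTriang_mor_zero₁₂ _ hdist
  · intro X' Y' f' p' δ' hdist' hX' hY'
    have hfp' : f ≫ p' = 0 := w.hom_zero (by omega) hX hY' _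
    have hf'p : f' ≫ p = 0 := w.hom_zero (by omega) hX' hY _
    obtain ⟨a, ha⟩ := Triangle.coyoneda_exact₂ _ hdist' f hfp'
    obtain ⟨a', ha'⟩ := Triangle.coyoneda_exact₂ _ hdist f' hf'p
    change X ⟶ X' at a; change X' ⟶ X at a'; change f = a ≫ f' at ha; change f' = a' ≫ f at ha'
    -- a ≫ a' = 𝟙 X
    have key : ∀ {A B O₀ Z : C} (g : A ⟶ O₀) (q : O₀ ⟶ Z) (d : Z ⟶ (shiftFunctor C (1 : ℤ)).obj A)
        (hd : Triangle.mk g q d ∈ distTriang C) (hA : w.leDeg (m - 1) A)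
        (hZ : w.geDeg (n + 1) Z) (u : B ⟶ A) (hBA : w.leDeg (m - 1) B) (hu : u ≫ g = 0), u = 0 := by
      intro A B O₀ Z g q d hd hA hZ u hBA hu
      obtain ⟨t, ht⟩ := Triangle.coyoneda_exact₂ _ (inv_rot_of_distTriang _ hd) u
        (by exact hu)
      have hZ' : w.geDeg n ((shiftFunctor C (-(1 : ℤ))).obj Z) :=
        w.ge_iso (((shiftFunctorAdd' C (-(1 : ℤ)) (-n) (-(n + 1)) (by ring)).app Z).symm) hZ
      have ht0 : t = 0 := w.hom_zero (by omega) hBA hZ' t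
      rw [ht, ht0]; exact zero_comp
    have haa' : a ≫ a' = 𝟙 X := by
      have h0 : (a ≫ a' - 𝟙 X) ≫ f = 0 := by
        rw [Preadditive.sub_comp, Category.id_comp, Category.assoc, ← ha', ← ha, sub_self]
      have := key f p δ hdist hX hY (a ≫ a' - 𝟙 X) hX h0
      rw [sub_eq_zero] at this
      exact this
    have ha'a : a' ≫ a = 𝟙 X' := by
      have h0 : (a' ≫ a - 𝟙 X') ≫ f' = 0 := by
        rw [Preadditive.sub_comp, Category.id_comp, Category.assoc, ← ha, ← ha', sub_self]
      have := key f' p' δ' hdist' hX' hY' (a' ≫ a - 𝟙 X') hX' h0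
      rw [sub_eq_zero] at this
      exact this
    obtain ⟨c, hc1, hc2⟩ := complete_distinguished_triangle_morphism (Triangle.mk f p δ)
      (Triangle.mk f' p' δ') hdist hdist' a (𝟙 O) (by change f ≫ 𝟙 O = a ≫ f'; rw [Category.comp_id]; exact ha)
    change Y ⟶ Y' at c; change p ≫ c = 𝟙 O ≫ p' at hc1
    change δ ≫ (shiftFunctor C (1 : ℤ)).map a = c ≫ δ' at hc2
    have : IsIso c := by
      refine Pretriangulated.isIso₃_of_isIso₁₂
        (Triangle.homMk (Triangle.mk f p δ) (Triangle.mk f' p' δ') a (𝟙 O) c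
          (by exact (Category.comp_id f).trans ha) (by exact hc1)
          (by exact hc2)) hdist hdist' ?_ ?_
      · exact ⟨a', haa', ha'a⟩
      · exact (inferInstance : IsIso (𝟙 O))
    exact ⟨⟨a, a', haa', ha'a⟩, asIso c, ha, by rw [asIso_hom, hc1, Category.id_comp], hc2⟩
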